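/- Let k be a field, n ≥ 2, and I an ideal of k[x₁,...,xₙ] such that I ∩ k[x₁] = {0}. Then there exists a nonzero polynomial q ∈ k[x₁] such that for every a ∈ k with q(a) ≠ 0, the image ideal ev_a(I) is a proper ideal of k[x₂,...,xₙ]. -/

import Mathlib

open MvPolynomial

/-- The evaluation homomorphism `ev_a : k[x₁,…,xₙ] → k[x₂,…,xₙ]`, `x₁ ↦ a`,
`xᵢ ↦ xᵢ₋₁` for `i ≥ 2`. -/
noncomputable def evalAt {k : Type*} [CommSemiring k] {n : ℕ} (a : k) :
    MvPolynomial (Fin (n + 1)) k →ₐ[k] MvPolynomial (Fin n) k :=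
  aeval (Fin.cases (C a) X)

/-- The canonical embedding `k[x₁] → k[x₁,…,xₙ]`. -/
noncomputable def univEmb (k : Type*) [CommSemiring k] (n : ℕ) :
    Polynomial k →ₐ[k] MvPolynomial (Fin (n + 1)) k :=
  Polynomial.aeval (X 0)

set_option maxHeartbeats 1000000
set_option synthInstance.maxHeartbeats 400000

section Key
attribute [local instance] MvPolynomial.algebraMvPolynomial

theorem key_lemma {k : Type*} [Field k] (m : ℕ)
    (J : Ideal (MvPolynomial (Fin m) (Polynomial k)))
    (hJ : Ideal.comap (MvPolynomial.C (σ := Fin m) (R := Polynomial k)) J = ⊥) :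
    ∃ q : Polynomial k, q ≠ 0 ∧ ∀ a : k, Polynomial.eval a q ≠ 0 →
      Ideal.map (MvPolynomial.map (Polynomial.evalRingHom a)) J ≠ ⊤ := by
  classical
  -- Step 1: the extension of J to K-coefficients is proper
  have hJ' : Ideal.map (algebraMap (MvPolynomial (Fin m) (Polynomial k))
      (MvPolynomial (Fin m) (FractionRing (Polynomial k)))) J ≠ ⊤ := by
    intro htop
    have h1 : (1 : MvPolynomial (Fin m) (FractionRing (Polynomial k))) ∈
        Ideal.map (algebraMap (MvPolynomial (Fin m) (Polynomial k))
          (MvPolynomial (Fin m) (FractionRing (Polynomial k)))) J :=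
      htop ▸ Submodule.mem_top
    rw [IsLocalization.mem_map_algebraMap_iff
      ((nonZeroDivisors (Polynomial k)).map
        (MvPolynomial.C (σ := Fin m) (R := Polynomial k)))] at h1
    obtain ⟨⟨x, y⟩, hxy⟩ := h1
    simp only [one_mul] at hxy
    have hinj : Function.Injective
        (algebraMap (MvPolynomial (Fin m) (Polynomial k))
          (MvPolynomial (Fin m) (FractionRing (Polynomial k)))) := by
      rw [MvPolynomial.algebraMap_def]
      exact MvPolynomial.map_injective _
        (IsFractionRing.injective (Polynomial k) (FractionRing (Polynomial k)))
    have hyx : (y : MvPolynomial (Fin m) (Polynomial k))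
        = (x : MvPolynomial (Fin m) (Polynomial k)) := hinj hxy
    obtain ⟨d, hd, hdC⟩ := y.2
    have : d ∈ Ideal.comap (MvPolynomial.C (σ := Fin m) (R := Polynomial k)) J := by
      rw [Ideal.mem_comap, hdC, hyx]; exact x.2
    rw [hJ, Ideal.mem_bot] at this
    exact nonZeroDivisors.ne_zero hd this
  -- Step 2: a maximal ideal over it; Zariski's lemma
  obtain ⟨𝔪, hmax, hle⟩ := Ideal.exists_le_maximal _ hJ'
  letI : Field (MvPolynomial (Fin m) (FractionRing (Polynomial k)) ⧸ 𝔪) :=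
    Ideal.Quotient.field 𝔪
  set φ : FractionRing (Polynomial k) →+*
      (MvPolynomial (Fin m) (FractionRing (Polynomial k)) ⧸ 𝔪) :=
    (Ideal.Quotient.mk 𝔪).comp MvPolynomial.C with hφdef
  have hφint : φ.IsIntegral :=
    MvPolynomial.quotient_mk_comp_C_isIntegral_of_isJacobsonRing 𝔪
  set ξ : Fin m → (MvPolynomial (Fin m) (FractionRing (Polynomial k)) ⧸ 𝔪) :=
    fun j => Ideal.Quotient.mk 𝔪 (X j) with hξdef
  choose p hmonic hroot using fun j => hφint (ξ j)
  -- Step 3: common denominators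
  have hdall : ∀ j, ∃ d : nonZeroDivisors (Polynomial k), ∀ i : ℕ,
      IsLocalization.IsInteger (Polynomial k) ((d : Polynomial k) • (p j).coeff i) := by
    intro j
    obtain ⟨d, hdi⟩ := IsLocalization.exist_integer_multiples
      (nonZeroDivisors (Polynomial k)) (p j).support (fun i => (p j).coeff i)
    refine ⟨d, fun i => ?_⟩
    by_cases hi : i ∈ (p j).support
    · exact hdi i hi
    · rw [Polynomial.notMem_support_iff.mp hi, smul_zero]
      exact IsLocalization.isInteger_zero
  choose d hdint using hdall
  refine ⟨∏ j, (d j : Polynomial k), nonZeroDivisors.ne_zero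
    (Submonoid.prod_mem _ (fun j _ => (d j).2)), ?_⟩
  set q : Polynomial k := ∏ j, (d j : Polynomial k) with hqdef
  intro a ha htop
  have hq : q ≠ 0 := nonZeroDivisors.ne_zero (Submonoid.prod_mem _ (fun j _ => (d j).2))
  -- Step 4: the localization A = (Polynomial k)[1/q] and its properties
  have hqunit : IsUnit (algebraMap (Polynomial k) (FractionRing (Polynomial k)) q) :=
    IsLocalization.map_units _ ⟨q, mem_nonZeroDivisors_of_ne_zero hq⟩
  letI : Algebra (Localization.Away q) (FractionRing (Polynomial k)) :=
    (IsLocalization.Away.lift (S := Localization.Away q) q hqunit).toAlgebra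
  have hcomm : ∀ s : Polynomial k,
      algebraMap (Localization.Away q) (FractionRing (Polynomial k))
        (algebraMap (Polynomial k) (Localization.Away q) s)
      = algebraMap (Polynomial k) (FractionRing (Polynomial k)) s := fun s =>
    IsLocalization.Away.lift_eq q hqunit s
  haveI : IsScalarTower (Polynomial k) (Localization.Away q) (FractionRing (Polynomial k)) :=
    IsScalarTower.of_algebraMap_eq (fun s => (hcomm s).symm)
  have hpow : Submonoid.powers q ≤ nonZeroDivisors (Polynomial k) :=
    powers_le_nonZeroDivisors_of_noZeroDivisors hq
  haveI : IsDomain (Localization.Away q) := IsLocalization.isDomain_localization hpow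
  haveI : IsIntegrallyClosed (Localization.Away q) :=
    isIntegrallyClosed_of_isLocalization (Localization.Away q) (Submonoid.powers q) hpow
  haveI : IsFractionRing (Localization.Away q) (FractionRing (Polynomial k)) :=
    IsFractionRing.isFractionRing_of_isDomain_of_isLocalization (Submonoid.powers q)
      (Localization.Away q) (FractionRing (Polynomial k))
  letI : Algebra (Localization.Away q)
      (MvPolynomial (Fin m) (FractionRing (Polynomial k)) ⧸ 𝔪) :=
    (φ.comp (algebraMap (Localization.Away q) (FractionRing (Polynomial k)))).toAlgebra
  have halgL : algebraMap (Localization.Away q)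
      (MvPolynomial (Fin m) (FractionRing (Polynomial k)) ⧸ 𝔪)
      = φ.comp (algebraMap (Localization.Away q) (FractionRing (Polynomial k))) := rfl
  have hdunit : ∀ e : Polynomial k, e ∣ q →
      IsUnit (algebraMap (Polynomial k) (Localization.Away q) e) := by
    rintro e ⟨c, hc⟩
    have hqA : IsUnit (algebraMap (Polynomial k) (Localization.Away q) q) :=
      IsLocalization.map_units _ ⟨q, Submonoid.mem_powers q⟩
    have h2 : algebraMap (Polynomial k) (Localization.Away q) q
        = algebraMap (Polynomial k) (Localization.Away q) e
          * algebraMap (Polynomial k) (Localization.Away q) c := by rw [hc, map_mul]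
    rw [h2] at hqA
    exact isUnit_of_mul_isUnit_left hqA
  -- Step 5: each ξ j is integral over A
  have hlift : ∀ j, p j ∈ Polynomial.lifts
      (algebraMap (Localization.Away q) (FractionRing (Polynomial k))) := by
    intro j
    rw [Polynomial.lifts_iff_coeff_lifts]
    intro i
    obtain ⟨s, hs⟩ := hdint j i
    have hdu : IsUnit (algebraMap (Polynomial k) (Localization.Away q) (d j)) :=
      hdunit _ (Finset.dvd_prod_of_mem _ (Finset.mem_univ j))
    refine ⟨(hdu.unit⁻¹ : _) * algebraMap (Polynomial k) (Localization.Away q) s, ?_⟩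
    have h1 : algebraMap (Polynomial k) (FractionRing (Polynomial k)) (d j) * (p j).coeff i
        = algebraMap (Polynomial k) (FractionRing (Polynomial k)) s := by
      rw [← Algebra.smul_def]; exact hs.symm
    have h2 : algebraMap (Localization.Away q) (FractionRing (Polynomial k))
        (algebraMap (Polynomial k) (Localization.Away q) (d j)) * (p j).coeff i
        = algebraMap (Localization.Away q) (FractionRing (Polynomial k))
          (algebraMap (Polynomial k) (Localization.Away q) s) := by
      rw [hcomm, hcomm, h1]
    calc algebraMap (Localization.Away q) (FractionRing (Polynomial k))
          ((hdu.unit⁻¹ : _) * algebraMap (Polynomial k) (Localization.Away q) s)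
        = algebraMap (Localization.Away q) (FractionRing (Polynomial k)) (hdu.unit⁻¹ : _)
          * (algebraMap (Localization.Away q) (FractionRing (Polynomial k))
            (algebraMap (Polynomial k) (Localization.Away q) (d j)) * (p j).coeff i) := by
          rw [map_mul, h2]
      _ = (algebraMap (Localization.Away q) (FractionRing (Polynomial k))
            ((hdu.unit⁻¹ : _) * (hdu.unit : _))) * (p j).coeff i := by
          rw [map_mul]; ring_nf; rw [IsUnit.unit_spec]; ring
      _ = (p j).coeff i := by rw [hdu.unit.inv_mul, map_one, one_mul]
  have hxi_int : ∀ j, IsIntegral (Localization.Away q) (ξ j) := by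
    intro j
    obtain ⟨p', hmap, _, hmon⟩ := Polynomial.lifts_and_degree_eq_and_monic (hlift j) (hmonic j)
    refine ⟨p', hmon, ?_⟩
    rw [halgL, ← Polynomial.eval₂_map, hmap]
    exact hroot j
  -- Step 6: the image of the canonical map lands in the integral closure of A
  have hρ : ∀ f : MvPolynomial (Fin m) (Polynomial k),
      (Ideal.Quotient.mk 𝔪) (MvPolynomial.map
        (algebraMap (Polynomial k) (FractionRing (Polynomial k))) f)
      ∈ integralClosure (Localization.Away q)
          (MvPolynomial (Fin m) (FractionRing (Polynomial k)) ⧸ 𝔪) := by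
    intro f
    induction f using MvPolynomial.induction_on with
    | C s =>
      rw [MvPolynomial.map_C]
      have : (Ideal.Quotient.mk 𝔪) (MvPolynomial.C
          (algebraMap (Polynomial k) (FractionRing (Polynomial k)) s))
          = algebraMap (Localization.Away q)
            (MvPolynomial (Fin m) (FractionRing (Polynomial k)) ⧸ 𝔪)
            (algebraMap (Polynomial k) (Localization.Away q) s) := by
        rw [halgL, RingHom.comp_apply, hcomm]; rfl
      rw [this]
      exact Subalgebra.algebraMap_mem _ _
    | add f g hf hg => rw [map_add, map_add]; exact add_mem hf hg
    | mul_X f j hf =>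
      rw [map_mul, map_mul, MvPolynomial.map_X]
      exact mul_mem hf (hxi_int j)
  -- Step 7: produce a unit from the assumed surjectivity onto ⊤
  have hsurj : Function.Surjective
      (MvPolynomial.map (Polynomial.evalRingHom a) :
        MvPolynomial (Fin m) (Polynomial k) →+* MvPolynomial (Fin m) k) :=
    MvPolynomial.map_surjective _ (fun x => ⟨Polynomial.C x, Polynomial.eval_C⟩)
  obtain ⟨f, hfJ, hf1⟩ := (Ideal.mem_map_iff_of_surjective _ hsurj).mp
    (htop ▸ Submodule.mem_top : (1 : MvPolynomial (Fin m) k) ∈ _)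
  have hker : f - 1 ∈ RingHom.ker (MvPolynomial.map (Polynomial.evalRingHom a)) := by
    rw [RingHom.mem_ker, map_sub, hf1, map_one, sub_self]
  rw [MvPolynomial.ker_map, Polynomial.ker_evalRingHom, Ideal.map_span,
    Set.image_singleton] at hker
  obtain ⟨g, hg⟩ := Ideal.mem_span_singleton'.mp hker
  -- Step 8: conclude
  have hft : (Ideal.Quotient.mk 𝔪) (MvPolynomial.map
      (algebraMap (Polynomial k) (FractionRing (Polynomial k))) f) = 0 :=
    Ideal.Quotient.eq_zero_iff_mem.mpr (hle (Ideal.mem_map_of_mem _ hfJ))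
  set t : Polynomial k := Polynomial.X - Polynomial.C a with htdef
  set w : MvPolynomial (Fin m) (FractionRing (Polynomial k)) ⧸ 𝔪 :=
    -((Ideal.Quotient.mk 𝔪) (MvPolynomial.map
      (algebraMap (Polynomial k) (FractionRing (Polynomial k))) g)) with hwdef
  have hkeyeq : φ (algebraMap (Polynomial k) (FractionRing (Polynomial k)) t) * w = 1 := by
    have h0 := congrArg (fun x => (Ideal.Quotient.mk 𝔪) (MvPolynomial.map
      (algebraMap (Polynomial k) (FractionRing (Polynomial k))) x)) hg
    simp only [map_mul, map_sub, map_one, MvPolynomial.map_C, hft] at h0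
    have hCt : (Ideal.Quotient.mk 𝔪) (MvPolynomial.C
        (algebraMap (Polynomial k) (FractionRing (Polynomial k)) t))
        = φ (algebraMap (Polynomial k) (FractionRing (Polynomial k)) t) := rfl
    rw [hCt] at h0
    rw [hwdef, mul_neg]
    linear_combination -h0
  have htK : algebraMap (Polynomial k) (FractionRing (Polynomial k)) t ≠ 0 := by
    have ht0 : t ≠ 0 := Polynomial.X_sub_C_ne_zero a
    exact fun h => ht0 (IsFractionRing.injective (Polynomial k)
      (FractionRing (Polynomial k)) (h.trans (map_zero _).symm))
  have hw_int : IsIntegral (Localization.Away q) w :=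
    (integralClosure (Localization.Away q) _).neg_mem (hρ g)
  -- w = φ(t⁻¹)
  have hwφ : w = φ ((algebraMap (Polynomial k) (FractionRing (Polynomial k)) t)⁻¹) := by
    rw [map_inv₀]
    exact (inv_eq_of_mul_eq_one_right hkeyeq).symm
  -- transfer integrality along φ
  let φalg : FractionRing (Polynomial k) →ₐ[Localization.Away q]
      (MvPolynomial (Fin m) (FractionRing (Polynomial k)) ⧸ 𝔪) :=
    { φ with commutes' := fun r => rfl }
  have hφinj : Function.Injective φalg := φ.injective
  have hv_int : IsIntegral (Localization.Away q)
      ((algebraMap (Polynomial k) (FractionRing (Polynomial k)) t)⁻¹) := by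
    rw [← isIntegral_algHom_iff φalg hφinj]
    rw [hwφ] at hw_int
    exact hw_int
  obtain ⟨y, hy⟩ := IsIntegrallyClosed.isIntegral_iff.mp hv_int
  have hunit : algebraMap (Polynomial k) (Localization.Away q) t * y = 1 := by
    apply IsFractionRing.injective (Localization.Away q) (FractionRing (Polynomial k))
    rw [map_mul, map_one, hcomm, hy, mul_inv_cancel₀ htK]
  -- evaluate at a
  have hu : ∀ s : Submonoid.powers q, IsUnit (Polynomial.evalRingHom a s) := by
    rintro ⟨s, n, rfl⟩
    simp only [Polynomial.coe_evalRingHom, Polynomial.eval_pow]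
    exact (isUnit_iff_ne_zero.mpr ha).pow n
  have hfinal := congrArg (IsLocalization.lift (S := Localization.Away q) hu) hunit
  rw [map_mul, map_one, IsLocalization.lift_eq] at hfinal
  have hta : Polynomial.evalRingHom a t = 0 := by
    simp [htdef]
  rw [hta, zero_mul] at hfinal
  exact zero_ne_one hfinal

end Key


/-- Lemma 2: if `I ∩ k[x₁] = {0}` then there is a nonzero `q ∈ k[x₁]` such that
for every `a` with `q(a) ≠ 0`, the ideal `ev_a(I)` of `k[x₂,…,xₙ]` is proper.
(Here the ambient ring has `n + 2 ≥ 2` variables.) -/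
theorem lemma_base2 {k : Type*} [Field k] (n : ℕ)
    (I : Ideal (MvPolynomial (Fin (n + 2)) k))
    (hI : Ideal.comap (univEmb k (n + 1)) I = ⊥) :
    ∃ q : Polynomial k, q ≠ 0 ∧
      ∀ a : k, q.eval a ≠ 0 → Ideal.map (evalAt a) I ≠ ⊤ := by
  classical
  set T : MvPolynomial (Fin (n + 2)) k ≃ₐ[k] MvPolynomial (Fin (n + 1)) (Polynomial k) :=
    (MvPolynomial.renameEquiv k (_root_.finSuccEquiv (n + 1))).trans
      (MvPolynomial.optionEquivRight k (Fin (n + 1))) with hTdef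
  have hTX0 : T (X (0 : Fin (n + 2))) = MvPolynomial.C Polynomial.X := by
    simp [hTdef, finSuccEquiv_zero, optionEquivRight_X_none]
  have hTXs : ∀ i : Fin (n + 1), T (X i.succ) = X i := by
    intro i
    simp [hTdef, finSuccEquiv_succ, optionEquivRight_X_some]
  have hTC : ∀ c : k, T (MvPolynomial.C c) = MvPolynomial.C (Polynomial.C c) := by
    intro c
    simp [hTdef, optionEquivRight_C]
  have hTemb : ∀ p : Polynomial k, T (univEmb k (n + 1) p) = MvPolynomial.C p := by
    intro p
    have h : (T.toAlgHom.comp (univEmb k (n + 1)))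
        = IsScalarTower.toAlgHom k (Polynomial k)
            (MvPolynomial (Fin (n + 1)) (Polynomial k)) := by
      apply Polynomial.algHom_ext
      simp only [AlgHom.coe_comp, AlgEquiv.toAlgHom_eq_coe, AlgHom.coe_coe, Function.comp_apply,
        IsScalarTower.coe_toAlgHom]
      rw [show (univEmb k (n + 1)) Polynomial.X = X 0 by simp [univEmb]]
      erw [hTX0]
      rfl
    have := DFunLike.congr_fun h p
    simpa using this
  set J : Ideal (MvPolynomial (Fin (n + 1)) (Polynomial k)) :=
    Ideal.map (T : MvPolynomial (Fin (n + 2)) k →+* MvPolynomial (Fin (n + 1)) (Polynomial k)) I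
    with hJdef
  have hJcomap : Ideal.comap (MvPolynomial.C (σ := Fin (n + 1)) (R := Polynomial k)) J = ⊥ := by
    ext p
    rw [Ideal.mem_comap, Ideal.mem_bot]
    constructor
    · intro hp
      have hsurjT : Function.Surjective
          (T : MvPolynomial (Fin (n + 2)) k →+* MvPolynomial (Fin (n + 1)) (Polynomial k)) :=
        T.surjective
      obtain ⟨x, hxI, hx⟩ := (Ideal.mem_map_iff_of_surjective _ hsurjT).mp hp
      have : univEmb k (n + 1) p ∈ I := by
        have hinj : Function.Injective T := T.injective
        have := hinj (show T x = T (univEmb k (n + 1) p) by rw [hTemb p]; exact hx)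
        rwa [← this]
      have := hI ▸ (Ideal.mem_comap.mpr this : p ∈ Ideal.comap (univEmb k (n + 1)) I)
      exact Ideal.mem_bot.mp this
    · rintro rfl
      simp only [map_zero]
      exact Ideal.zero_mem J
  obtain ⟨q, hq, hmain⟩ := key_lemma (n + 1) J hJcomap
  refine ⟨q, hq, fun a ha htop => hmain a ha ?_⟩
  have hcompeq : (MvPolynomial.map (Polynomial.evalRingHom a)).comp
      (T : MvPolynomial (Fin (n + 2)) k →+* MvPolynomial (Fin (n + 1)) (Polynomial k))
      = (evalAt a : MvPolynomial (Fin (n + 2)) k →ₐ[k] MvPolynomial (Fin (n + 1)) k) := by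
    apply MvPolynomial.ringHom_ext
    · intro c
      simp only [RingHom.coe_comp, Function.comp_apply, RingHom.coe_coe]
      rw [hTC c, MvPolynomial.map_C]
      simp [evalAt]
    · intro i
      refine Fin.cases ?_ ?_ i
      · simp only [RingHom.coe_comp, Function.comp_apply, RingHom.coe_coe]
        rw [hTX0, MvPolynomial.map_C]
        simp [evalAt]
      · intro j
        simp only [RingHom.coe_comp, Function.comp_apply, RingHom.coe_coe]
        rw [hTXs j, MvPolynomial.map_X]
        simp [evalAt]
  rw [hJdef, Ideal.map_map, hcompeq]
  exact htop
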